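/- Let λ > 1, μ = √(λ²−1), a > 0 with a ≠ 1, and define X : ℝ² → ℝ³ by X(u,v) = ( λ·u − sinh(a u)·sin(a v)/a , [cosh u·((a²−1)·cos v + cosh(a u)·((aμ + λ)·cos v·sin(a v) − (aλ + μ)·sin v·cos(a v))) + sinh u·sinh(a u)·((aμ + λ)·sin v·cos(a v) − (aλ + μ)·cos v·sin(a v))]/(a²−1) , [sinh u·((a²−1)·cos v + cosh(a u)·((aμ + λ)·cos v·sin(a v) − (aλ + μ)·sin v·cos(a v))) + cosh u·sinh(a u)·((aμ + λ)·sin v·cos(a v) − (aλ + μ)·cos v·sin(a v))]/(a²−1) ). Then: (i) each coordinate function of X is harmonic on ℝ² (∂²X_k/∂u² + ∂²X_k/∂v² = 0); (ii) X is Lorentz-conformal, i.e. ⟨X_u,X_u⟩_L = ⟨X_v,X_v⟩_L and ⟨X_u,X_v⟩_L = 0 everywhere; and (iii) X(u,0) = (λ·u, cosh u, sinh u) for all u ∈ ℝ. -/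

import Mathlib

open Real

/-- Lorentzian inner product on ℝ³: ⟨p,q⟩ = p₁q₁ + p₂q₂ − p₃q₃. -/
noncomputable def lorentz (p q : ℝ × ℝ × ℝ) : ℝ :=
  p.1 * q.1 + p.2.1 * q.2.1 - p.2.2 * q.2.2

/-- First coordinate of the helicoidal helicoid over a helix of type I (spacelike axis). -/
noncomputable def X1 (a lam mu u v : ℝ) : ℝ :=
  lam * u - sinh (a*u) * sin (a*v) / a

/-- Second coordinate of the helicoidal helicoid over a helix of type I (spacelike axis). -/
noncomputable def X2 (a lam mu u v : ℝ) : ℝ :=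
  (cosh u * ((a^2 - 1) * cos v
      + cosh (a*u) * ((a * mu + lam) * cos v * sin (a*v)
        - (a * lam + mu) * sin v * cos (a*v)))
   + sinh u * sinh (a*u) * ((a * mu + lam) * sin v * cos (a*v)
        - (a * lam + mu) * cos v * sin (a*v))) / (a^2 - 1)

/-- Third coordinate of the helicoidal helicoid over a helix of type I (spacelike axis). -/
noncomputable def X3 (a lam mu u v : ℝ) : ℝ :=
  (sinh u * ((a^2 - 1) * cos v
      + cosh (a*u) * ((a * mu + lam) * cos v * sin (a*v)
        - (a * lam + mu) * sin v * cos (a*v)))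
   + cosh u * sinh (a*u) * ((a * mu + lam) * sin v * cos (a*v)
        - (a * lam + mu) * cos v * sin (a*v))) / (a^2 - 1)

/-- Partial derivative of X with respect to u. -/
noncomputable def Xu (a lam mu u v : ℝ) : ℝ × ℝ × ℝ :=
  (deriv (fun s => X1 a lam mu s v) u, deriv (fun s => X2 a lam mu s v) u,
   deriv (fun s => X3 a lam mu s v) u)

/-- Partial derivative of X with respect to v. -/
noncomputable def Xv (a lam mu u v : ℝ) : ℝ × ℝ × ℝ :=
  (deriv (fun t => X1 a lam mu u t) v, deriv (fun t => X2 a lam mu u t) v,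
   deriv (fun t => X3 a lam mu u t) v)

/-! ### Auxiliary machinery -/


/-- A general ansatz closed under `d/ds`: linear combination of
`s, 1, cosh s, sinh s, cosh (a s), sinh (a s)` and products. -/
noncomputable def G (a c0 c1 c2 c3 c4 c5 c6 c7 c8 c9 s : ℝ) : ℝ :=
  c0*s + c1 + c2*Real.cosh s + c3*Real.sinh s + c4*Real.cosh (a*s) + c5*Real.sinh (a*s)
  + c6*(Real.cosh s*Real.cosh (a*s)) + c7*(Real.cosh s*Real.sinh (a*s))
  + c8*(Real.sinh s*Real.cosh (a*s)) + c9*(Real.sinh s*Real.sinh (a*s))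

/-- A general ansatz closed under `d/dt`: linear combination of
`1, cos t, sin t, cos (a t), sin (a t)` and products. -/
noncomputable def H (a d1 d2 d3 d4 d5 d6 d7 d8 d9 t : ℝ) : ℝ :=
  d1 + d2*Real.cos t + d3*Real.sin t + d4*Real.cos (a*t) + d5*Real.sin (a*t)
  + d6*(Real.cos t*Real.cos (a*t)) + d7*(Real.cos t*Real.sin (a*t))
  + d8*(Real.sin t*Real.cos (a*t)) + d9*(Real.sin t*Real.sin (a*t))

lemma G_hasDerivAt (a c0 c1 c2 c3 c4 c5 c6 c7 c8 c9 u : ℝ) :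
    HasDerivAt (fun x => G a c0 c1 c2 c3 c4 c5 c6 c7 c8 c9 x)
      (G a 0 c0 c3 c2 (a*c5) (a*c4) (a*c7+c8) (a*c6+c9) (c6+a*c9) (c7+a*c8) u) u := by
  have hl : HasDerivAt (fun x : ℝ => a*x) a u := by
    simpa using (hasDerivAt_id u).const_mul a
  have hC : HasDerivAt Real.cosh (Real.sinh u) u := Real.hasDerivAt_cosh u
  have hS : HasDerivAt Real.sinh (Real.cosh u) u := Real.hasDerivAt_sinh u
  have hCa : HasDerivAt (fun x : ℝ => Real.cosh (a*x)) (Real.sinh (a*u) * a) u := hl.cosh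
  have hSa : HasDerivAt (fun x : ℝ => Real.sinh (a*x)) (Real.cosh (a*u) * a) u := hl.sinh
  have t0 := (hasDerivAt_id u).const_mul c0
  have t1 := t0.add_const c1
  have t2 := t1.add (hC.const_mul c2)
  have t3 := t2.add (hS.const_mul c3)
  have t4 := t3.add (hCa.const_mul c4)
  have t5 := t4.add (hSa.const_mul c5)
  have t6 := t5.add ((hC.mul hCa).const_mul c6)
  have t7 := t6.add ((hC.mul hSa).const_mul c7)
  have t8 := t7.add ((hS.mul hCa).const_mul c8)
  have Hd := t8.add ((hS.mul hSa).const_mul c9)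
  exact Hd.congr_deriv (by unfold G; ring)

lemma H_hasDerivAt (a d1 d2 d3 d4 d5 d6 d7 d8 d9 v : ℝ) :
    HasDerivAt (fun t => H a d1 d2 d3 d4 d5 d6 d7 d8 d9 t)
      (H a 0 d3 (-d2) (a*d5) (-(a*d4)) (a*d7+d8) (d9-a*d6) (a*d9-d6) (-(d7+a*d8)) v) v := by
  have hl : HasDerivAt (fun x : ℝ => a*x) a v := by
    simpa using (hasDerivAt_id v).const_mul a
  have hC : HasDerivAt Real.cos (-Real.sin v) v := Real.hasDerivAt_cos v
  have hS : HasDerivAt Real.sin (Real.cos v) v := Real.hasDerivAt_sin v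
  have hCa : HasDerivAt (fun x : ℝ => Real.cos (a*x)) (-Real.sin (a*v) * a) v := hl.cos
  have hSa : HasDerivAt (fun x : ℝ => Real.sin (a*x)) (Real.cos (a*v) * a) v := hl.sin
  have t1 := (hasDerivAt_const v d1).add (hC.const_mul d2)
  have t2 := t1.add (hS.const_mul d3)
  have t3 := t2.add (hCa.const_mul d4)
  have t4 := t3.add (hSa.const_mul d5)
  have t5 := t4.add ((hC.mul hCa).const_mul d6)
  have t6 := t5.add ((hC.mul hSa).const_mul d7)
  have t7 := t6.add ((hS.mul hCa).const_mul d8)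
  have Hd := t7.add ((hS.mul hSa).const_mul d9)
  exact Hd.congr_deriv (by unfold H; ring)

lemma G_deriv (a c0 c1 c2 c3 c4 c5 c6 c7 c8 c9 : ℝ) :
    (deriv fun x => G a c0 c1 c2 c3 c4 c5 c6 c7 c8 c9 x)
      = fun x => G a 0 c0 c3 c2 (a*c5) (a*c4) (a*c7+c8) (a*c6+c9) (c6+a*c9) (c7+a*c8) x :=
  funext fun u => (G_hasDerivAt a c0 c1 c2 c3 c4 c5 c6 c7 c8 c9 u).deriv

lemma H_deriv (a d1 d2 d3 d4 d5 d6 d7 d8 d9 : ℝ) :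
    (deriv fun t => H a d1 d2 d3 d4 d5 d6 d7 d8 d9 t)
      = fun t => H a 0 d3 (-d2) (a*d5) (-(a*d4)) (a*d7+d8) (d9-a*d6) (a*d9-d6) (-(d7+a*d8)) t :=
  funext fun v => (H_hasDerivAt a d1 d2 d3 d4 d5 d6 d7 d8 d9 v).deriv

lemma X1_as_G (a lam mu v s : ℝ) :
    X1 a lam mu s v = G a lam 0 0 0 0 (-(Real.sin (a*v))/a) 0 0 0 0 s := by
  unfold X1 G; ring

lemma X2_as_G (a lam mu v s : ℝ) :
    X2 a lam mu s v = G a 0 0 (((a^2-1)*Real.cos v)/(a^2-1)) 0 0 0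
      (((a*mu+lam)*Real.cos v*Real.sin (a*v) - (a*lam+mu)*Real.sin v*Real.cos (a*v))/(a^2-1))
      0 0
      (((a*mu+lam)*Real.sin v*Real.cos (a*v) - (a*lam+mu)*Real.cos v*Real.sin (a*v))/(a^2-1))
      s := by
  unfold X2 G; ring

lemma X3_as_G (a lam mu v s : ℝ) :
    X3 a lam mu s v = G a 0 0 0 (((a^2-1)*Real.cos v)/(a^2-1)) 0 0 0
      (((a*mu+lam)*Real.sin v*Real.cos (a*v) - (a*lam+mu)*Real.cos v*Real.sin (a*v))/(a^2-1))
      (((a*mu+lam)*Real.cos v*Real.sin (a*v) - (a*lam+mu)*Real.sin v*Real.cos (a*v))/(a^2-1))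
      0 s := by
  unfold X3 G; ring

lemma X1_as_H (a lam mu u t : ℝ) :
    X1 a lam mu u t = H a (lam*u) 0 0 0 (-(Real.sinh (a*u))/a) 0 0 0 0 t := by
  unfold X1 H; ring

lemma X2_as_H (a lam mu u t : ℝ) :
    X2 a lam mu u t = H a 0 (((a^2-1)*Real.cosh u)/(a^2-1)) 0 0 0 0
      ((Real.cosh u*Real.cosh (a*u)*(a*mu+lam) - Real.sinh u*Real.sinh (a*u)*(a*lam+mu))/(a^2-1))
      ((Real.sinh u*Real.sinh (a*u)*(a*mu+lam) - Real.cosh u*Real.cosh (a*u)*(a*lam+mu))/(a^2-1))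
      0 t := by
  unfold X2 H; ring

lemma X3_as_H (a lam mu u t : ℝ) :
    X3 a lam mu u t = H a 0 (((a^2-1)*Real.sinh u)/(a^2-1)) 0 0 0 0
      ((Real.sinh u*Real.cosh (a*u)*(a*mu+lam) - Real.cosh u*Real.sinh (a*u)*(a*lam+mu))/(a^2-1))
      ((Real.cosh u*Real.sinh (a*u)*(a*mu+lam) - Real.sinh u*Real.cosh (a*u)*(a*lam+mu))/(a^2-1))
      0 t := by
  unfold X3 H; ring

lemma Xu_clean (a lam mu u v : ℝ) (ha0 : a ≠ 0) (hD : a^2-1 ≠ 0) :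
    Xu a lam mu u v = (lam - Real.cosh (a*u)*Real.sin (a*v),
      Real.sinh u*Real.cos v
        + Real.cosh u*Real.sinh (a*u)*(mu*Real.cos v*Real.sin (a*v) - lam*Real.sin v*Real.cos (a*v))
        + Real.sinh u*Real.cosh (a*u)*(mu*Real.sin v*Real.cos (a*v) - lam*Real.cos v*Real.sin (a*v)),
      Real.cosh u*Real.cos v
        + Real.cosh u*Real.cosh (a*u)*(mu*Real.sin v*Real.cos (a*v) - lam*Real.cos v*Real.sin (a*v))
        + Real.sinh u*Real.sinh (a*u)*(mu*Real.cos v*Real.sin (a*v) - lam*Real.sin v*Real.cos (a*v))) := by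
  unfold Xu
  simp only [X1_as_G, X2_as_G, X3_as_G, G_deriv]
  simp only [Prod.mk.injEq]
  refine ⟨?_, ?_, ?_⟩ <;> (unfold G; field_simp; ring)

lemma Xv_clean (a lam mu u v : ℝ) (ha0 : a ≠ 0) (hD : a^2-1 ≠ 0) :
    Xv a lam mu u v = (-(Real.sinh (a*u)*Real.cos (a*v)),
      -(Real.cosh u*Real.sin v)
        + (mu*Real.cosh u*Real.cosh (a*u) - lam*Real.sinh u*Real.sinh (a*u))*(Real.cos v*Real.cos (a*v))
        + (lam*Real.cosh u*Real.cosh (a*u) - mu*Real.sinh u*Real.sinh (a*u))*(Real.sin v*Real.sin (a*v)),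
      -(Real.sinh u*Real.sin v)
        + (mu*Real.sinh u*Real.cosh (a*u) - lam*Real.cosh u*Real.sinh (a*u))*(Real.cos v*Real.cos (a*v))
        + (lam*Real.sinh u*Real.cosh (a*u) - mu*Real.cosh u*Real.sinh (a*u))*(Real.sin v*Real.sin (a*v))) := by
  unfold Xv
  simp only [X1_as_H, X2_as_H, X3_as_H, H_deriv]
  simp only [Prod.mk.injEq]
  refine ⟨?_, ?_, ?_⟩ <;> (unfold H; field_simp; ring)

/-- The helicoidal helicoid over a helix of type I is harmonic, Lorentz-conformal, and
contains the helix (λu, cosh u, sinh u). -/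
theorem helicoidal_helicoid_spacelike_typeI (a lam mu : ℝ)
    (hlam : 1 < lam) (hmu : mu = Real.sqrt (lam^2 - 1))
    (ha : 0 < a) (ha1 : a ≠ 1) :
    (∀ u v : ℝ,
      deriv (deriv (fun s => X1 a lam mu s v)) u + deriv (deriv (fun t => X1 a lam mu u t)) v = 0 ∧
      deriv (deriv (fun s => X2 a lam mu s v)) u + deriv (deriv (fun t => X2 a lam mu u t)) v = 0 ∧
      deriv (deriv (fun s => X3 a lam mu s v)) u + deriv (deriv (fun t => X3 a lam mu u t)) v = 0) ∧
    (∀ u v : ℝ,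
      lorentz (Xu a lam mu u v) (Xu a lam mu u v) = lorentz (Xv a lam mu u v) (Xv a lam mu u v) ∧
      lorentz (Xu a lam mu u v) (Xv a lam mu u v) = 0) ∧
    (∀ u : ℝ, (X1 a lam mu u 0, X2 a lam mu u 0, X3 a lam mu u 0) = (lam * u, cosh u, sinh u)) := by
  have ha0 : a ≠ 0 := ne_of_gt ha
  have hD : a^2 - 1 ≠ 0 := by
    intro h
    rcases mul_eq_zero.1 (show (a-1)*(a+1) = 0 by linear_combination h) with h' | h'
    · exact ha1 (by linarith)
    · linarith
  refine ⟨fun u v => ⟨?_, ?_, ?_⟩, fun u v => ?_, fun u => ?_⟩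
  · rw [funext (X1_as_G a lam mu v), funext (X1_as_H a lam mu u)]
    simp only [G_deriv, H_deriv]
    unfold G H; field_simp; ring
  · rw [funext (X2_as_G a lam mu v), funext (X2_as_H a lam mu u)]
    simp only [G_deriv, H_deriv]
    unfold G H; field_simp; ring
  · rw [funext (X3_as_G a lam mu v), funext (X3_as_H a lam mu u)]
    simp only [G_deriv, H_deriv]
    unfold G H; field_simp; ring
  · rw [Xu_clean a lam mu u v ha0 hD, Xv_clean a lam mu u v ha0 hD]
    have p1 := Real.cosh_sq_sub_sinh_sq u
    have p2 := Real.cosh_sq_sub_sinh_sq (a*u)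
    have p3 := Real.sin_sq_add_cos_sq v
    have p4 := Real.sin_sq_add_cos_sq (a*v)
    have p5 : mu^2 = lam^2 - 1 := by
      rw [hmu, sq_sqrt (by nlinarith : (0:ℝ) ≤ lam^2 - 1)]
    constructor
    · simp only [lorentz]
      linear_combination ((-1)*(Real.sin v)^2 + (-1)*(Real.cos v)^2 + (Real.sinh (a*u))^2*(Real.sin v)^2*(Real.sin (a*v))^2*(mu)^2 + (Real.sinh (a*u))^2*(Real.sin v)^2*(Real.cos (a*v))^2*(lam)^2 + (Real.sinh (a*u))^2*(Real.cos v)^2*(Real.sin (a*v))^2*(mu)^2 + (Real.sinh (a*u))^2*(Real.cos v)^2*(Real.cos (a*v))^2*(lam)^2 + (2)*(Real.cosh (a*u))*(Real.sin v)^2*(Real.sin (a*v))*(lam) + (2)*(Real.cosh (a*u))*(Real.cos v)^2*(Real.sin (a*v))*(lam) + (-1)*(Real.cosh (a*u))^2*(Real.sin v)^2*(Real.sin (a*v))^2*(lam)^2 + (-1)*(Real.cosh (a*u))^2*(Real.sin v)^2*(Real.cos (a*v))^2*(mu)^2 + (-1)*(Real.cosh (a*u))^2*(Real.cos v)^2*(Real.sin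 (a*v))^2*(lam)^2 + (-1)*(Real.cosh (a*u))^2*(Real.cos v)^2*(Real.cos (a*v))^2*(mu)^2) * p1 + ((Real.sin (a*v))^2 + (-1)*(Real.sin v)^2*(Real.sin (a*v))^2*(lam)^2 + (-1)*(Real.sin v)^2*(Real.cos (a*v))^2*(mu)^2 + (-1)*(Real.cos v)^2*(Real.sin (a*v))^2*(lam)^2 + (-1)*(Real.cos v)^2*(Real.cos (a*v))^2*(mu)^2) * p2 + ((-1) + (-1)*(Real.sin (a*v))^2*(lam)^2 + (-1)*(Real.cos (a*v))^2*(mu)^2 + (Real.sinh (a*u))^2*(Real.sin (a*v))^2*(mu)^2 + (-1)*(Real.sinh (a*u))^2*(Real.sin (a*v))^2*(lam)^2 + (-1)*(Real.sinh (a*u))^2*(Real.cos (a*v))^2*(mu)^2 + (Real.sinh (a*u))^2*(Real.cos (a*v))^2*(lam)^2 + (2)*(Real.cosh (a*u))*(Real.sin (a*v))*(lam)) * p3 + ((1) + (-1)*(lam)^2 + (Real.sinh (a*u))^2 + (Real.sinh (a*u))^2*(mu)^2 + (-1)*(Real.sinh (a*u))^2*(lam)^2) * p4 + ((-1)*(Real.cos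 (a*v))^2 + (Real.sinh (a*u))^2 + (-2)*(Real.sinh (a*u))^2*(Real.cos (a*v))^2) * p5
    · simp only [lorentz]
      linear_combination ((Real.sinh (a*u))*(Real.sin v)^2*(Real.cos (a*v))*(lam) + (Real.sinh (a*u))*(Real.cos v)^2*(Real.cos (a*v))*(lam) + (Real.cosh (a*u))*(Real.sinh (a*u))*(Real.sin v)^2*(Real.cos (a*v))*(Real.sin (a*v))*(mu)^2 + (-1)*(Real.cosh (a*u))*(Real.sinh (a*u))*(Real.sin v)^2*(Real.cos (a*v))*(Real.sin (a*v))*(lam)^2 + (Real.cosh (a*u))*(Real.sinh (a*u))*(Real.cos v)^2*(Real.cos (a*v))*(Real.sin (a*v))*(mu)^2 + (-1)*(Real.cosh (a*u))*(Real.sinh (a*u))*(Real.cos v)^2*(Real.cos (a*v))*(Real.sin (a*v))*(lam)^2) * p1 + ((Real.sinh (a*u))*(Real.cos (a*v))*(lam) + (Real.cosh (a*u))*(Real.sinh (a*u))*(Real.cos (a*v))*(Real.sin (a*v))*(mu)^2 + (-1)*(Real.cosh (a*u))*(Real.sinh (a*u))*(Real.cos (a*v))*(Real.sin (a*v))*(lam)^2)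 * p3 + ((Real.cosh (a*u))*(Real.sinh (a*u))*(Real.cos (a*v))*(Real.sin (a*v))) * p5
  · simp only [Prod.mk.injEq, X1, X2, X3, mul_zero, Real.sin_zero, Real.cos_zero,
      mul_one, sub_zero, zero_div, mul_zero, zero_mul, add_zero, zero_add]
    refine ⟨by simp, ?_, ?_⟩ <;> field_simp
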